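/- Let σ_1, σ_2 ∈ Σ_{r^m}* with the concatenation σ_2·σ_1 nonempty, and let σ ∈ Σ_{r^m}* be a nonempty word. Then Γ_{σ_1}^{-1}(ξ(σ)) belongs to the topological closure of the set {ξ(σ_2·σ^k·σ_1) : k ∈ ℕ} ⊆ ℝ^m, where σ^k denotes the k-fold concatenation of σ. -/

import Mathlib

/-- The alphabet `Σ_{r^m}` of digit vectors. -/
abbrev Alpha (r m : ℕ) := Fin m → Fin r
abbrev Word (r m : ℕ) := List (Alpha r m)

/-- `ρ(b₁⋯bₙ) = Σᵢ r^(i-1)·bᵢ` (least significant digit first), viewed in `ℝ^m`. -/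
noncomputable def rho (r m : ℕ) : Word r m → (Fin m → ℝ)
  | [] => 0
  | b :: w => (fun j => (b j : ℝ)) + (r : ℝ) • rho r m w

/-- `Γ_σ(x) = r^|σ|·x + ρ(σ)`. -/
noncomputable def Gam (r m : ℕ) (σ : Word r m) (x : Fin m → ℝ) : Fin m → ℝ :=
  (r : ℝ) ^ σ.length • x + rho r m σ

/-- The inverse bijection `Γ_σ⁻¹(y) = (y - ρ(σ))/r^|σ|`. -/
noncomputable def GamInv (r m : ℕ) (σ : Word r m) (y : Fin m → ℝ) : Fin m → ℝ :=
  ((r : ℝ) ^ σ.length)⁻¹ • (y - rho r m σ)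

/-- `ξ(σ) = ρ(σ)/(1 - r^|σ|)` (meaningful for nonempty `σ`). -/
noncomputable def xi (r m : ℕ) (σ : Word r m) : Fin m → ℝ :=
  (1 - (r : ℝ) ^ σ.length)⁻¹ • rho r m σ

/-- `ρ(L) = {ρ(σ) : σ ∈ L}`. -/
def rhoSet (r m : ℕ) (L : Set (Word r m)) : Set (Fin m → ℝ) :=
  {x | ∃ σ ∈ L, x = rho r m σ}

/-- `ξ(L) = {ξ(σ) : σ ∈ L, σ ≠ ε}`. -/
def xiSet (r m : ℕ) (L : Set (Word r m)) : Set (Fin m → ℝ) :=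
  {x | ∃ σ ∈ L, σ ≠ [] ∧ x = xi r m σ}

/-- Kleene star of a language. -/
def kstar' {α : Type*} (L : Set (List α)) : Set (List α) :=
  {w | ∃ ws : List (List α), (∀ u ∈ ws, u ∈ L) ∧ w = ws.flatten}

/-- Concatenation of two languages. -/
def catL {α : Type*} (A B : Set (List α)) : Set (List α) :=
  {w | ∃ a ∈ A, ∃ b ∈ B, w = a ++ b}

/-- `chainLang σ Ls n = σ_{n+1}·(L_n)*·σ_n ⋯ (L_1)*·σ_1`. -/
def chainLang {α : Type*} (σ : ℕ → List α) (Ls : ℕ → Set (List α)) : ℕ → Set (List α)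
  | 0 => {σ 1}
  | n + 1 => catL {σ (n + 2)} (catL (kstar' (Ls (n + 1))) (chainLang σ Ls n))

/-- `catDown σ hi lo = σ_hi·σ_{hi-1}⋯σ_lo` (empty if `lo > hi`). -/
def catDown {α : Type*} (σ : ℕ → List α) (hi lo : ℕ) : List α :=
  ((List.range (hi + 1 - lo)).map fun j => σ (hi - j)).flatten

/-- `catUp σ k = σ_1·σ_2⋯σ_k`. -/
def catUp {α : Type*} (σ : ℕ → List α) (k : ℕ) : List α :=
  ((List.range k).map fun j => σ (j + 1)).flatten

/-- `σ^k`, the `k`-fold concatenation of `σ`. -/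
def repK {α : Type*} (σ : List α) (k : ℕ) : List α := (List.replicate k σ).flatten

/-- `ℝ₋·X = {t·x : t ≤ 0, x ∈ X}`. -/
def negSmul {m : ℕ} (X : Set (Fin m → ℝ)) : Set (Fin m → ℝ) :=
  {y | ∃ t : ℝ, t ≤ 0 ∧ ∃ x ∈ X, y = t • x}

/-- The cone `C(R)` generated by a finite set of rays. -/
def coneOf {m : ℕ} (R : Finset ((Fin m → ℝ) × ℝ)) : Set ((Fin m → ℝ) × ℝ) :=
  {y | ∃ t : ((Fin m → ℝ) × ℝ) → ℝ, (∀ p, 0 ≤ t p) ∧ y = ∑ p ∈ R, t p • p}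

/-- The polyhedral convex set `P(R) = {x : (x,1) ∈ C(R)}`. -/
def polyOf {m : ℕ} (R : Finset ((Fin m → ℝ) × ℝ)) : Set (Fin m → ℝ) :=
  {x | (x, (1 : ℝ)) ∈ coneOf R}


lemma rho_append' (r m : ℕ) (u v : Word r m) :
    rho r m (u ++ v) = rho r m u + (r:ℝ)^u.length • rho r m v := by
  induction u with
  | nil => simp [rho]
  | cons b w ih =>
    simp only [List.cons_append, rho, List.append_eq, ih, List.length_cons, smul_add, pow_succ',
      mul_smul, add_assoc]

lemma repK_succ' {α : Type*} (σ : List α) (k : ℕ) :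
    repK σ (k+1) = σ ++ repK σ k := by
  simp [repK, List.replicate_succ]

lemma length_repK' {α : Type*} (σ : List α) (k : ℕ) :
    (repK σ k).length = k * σ.length := by
  induction k with
  | zero => simp [repK]
  | succ k ih => rw [repK_succ']; simp [ih]; ring

lemma rho_repK' (r m : ℕ) (σ : Word r m) (k : ℕ) :
    rho r m (repK σ k) =
      (∑ i ∈ Finset.range k, ((r:ℝ)^σ.length)^i) • rho r m σ := by
  induction k with
  | zero => simp [repK, rho]
  | succ k ih =>
    rw [repK_succ', rho_append', ih, geom_sum_succ, smul_smul]
    module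

/-- `Γ_{σ₁}⁻¹(ξ(σ))` is in the closure of `{ξ(σ₂·σ^k·σ₁) : k ∈ ℕ}`. -/
theorem gamInv_xi_mem_closure
    (r m : ℕ) (hr : 2 ≤ r) (hm : 1 ≤ m)
    (σ₁ σ₂ σ : Word r m) (h₂₁ : σ₂ ++ σ₁ ≠ []) (hσ : σ ≠ []) :
    GamInv r m σ₁ (xi r m σ) ∈
      closure {x : Fin m → ℝ | ∃ k : ℕ, x = xi r m (σ₂ ++ repK σ k ++ σ₁)} := by
  set n := σ.length with hn
  set a := σ₁.length with ha
  set b := σ₂.length with hb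
  have hn1 : 1 ≤ n := List.length_pos_iff.mpr hσ
  have hab : 1 ≤ a + b := by
    by_contra h
    push_neg at h
    have ha0 : σ₁ = [] := List.length_eq_zero_iff.mp (by omega)
    have hb0 : σ₂ = [] := List.length_eq_zero_iff.mp (by omega)
    exact h₂₁ (by simp [ha0, hb0])
  have hR1 : (1:ℝ) < (r:ℝ) := by exact_mod_cast (by omega : 1 < r)
  have hR0 : (0:ℝ) < (r:ℝ) := by linarith
  have hRne : (r:ℝ) ≠ 0 := ne_of_gt hR0
  have hT1 : (1:ℝ) < (r:ℝ) ^ n := one_lt_pow₀ hR1 (by omega)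
  have hTne1 : ((r:ℝ) ^ n) ≠ 1 := ne_of_gt hT1
  have hTsub : ((r:ℝ) ^ n - 1) ≠ 0 := sub_ne_zero.mpr hTne1
  have hTsub' : (1 - (r:ℝ) ^ n) ≠ 0 := sub_ne_zero.mpr (ne_of_lt hT1)
  have hAB2 : (2:ℝ) ≤ (r:ℝ) ^ (a + b) := by
    calc (2:ℝ) ≤ (r:ℝ) := by exact_mod_cast hr
    _ = (r:ℝ) ^ 1 := (pow_one _).symm
    _ ≤ (r:ℝ) ^ (a+b) := pow_le_pow_right₀ (le_of_lt hR1) hab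
  set v2 := rho r m σ₂
  set vs := rho r m σ
  set v1 := rho r m σ₁
  set F : ℝ → (Fin m → ℝ) := fun s =>
    (s - (r:ℝ)^(a+b))⁻¹ • (s • v2 + ((r:ℝ)^b * (1 - s) / ((r:ℝ)^n - 1)) • vs
      + ((r:ℝ)^b) • v1) with hF
  have hF0 : F 0 = GamInv r m σ₁ (xi r m σ) := by
    have haz : ((r:ℝ)^a) ≠ 0 := pow_ne_zero _ hRne
    have hbz : ((r:ℝ)^b) ≠ 0 := pow_ne_zero _ hRne
    have habz : ((r:ℝ)^(a+b)) ≠ 0 := pow_ne_zero _ hRne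
    simp only [hF, GamInv, xi, ← ha, ← hn]
    match_scalars <;> (field_simp [pow_add]; try ring)
  have hkey : ∀ k : ℕ, xi r m (σ₂ ++ repK σ k ++ σ₁) = F ((((r:ℝ)^n)⁻¹) ^ k) := by
    intro k
    have ht1 : (1:ℝ) ≤ ((r:ℝ)^n) ^ k := one_le_pow₀ (le_of_lt hT1)
    have ht0 : (((r:ℝ)^n) ^ k) ≠ 0 := by positivity
    have hd2 : ((((r:ℝ)^n) ^ k)⁻¹ - (r:ℝ)^(a+b)) ≠ 0 := by
      have : (((r:ℝ)^n) ^ k)⁻¹ ≤ 1 := inv_le_one_of_one_le₀ ht1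
      nlinarith
    have hlen : (σ₂ ++ repK σ k ++ σ₁).length = b + (k * n + a) := by
      simp [length_repK', ← hn, ← ha, ← hb]
    have hd1 : (1 - (r:ℝ) ^ (b + (k * n + a))) ≠ 0 := by
      have h2 : (2:ℝ) ≤ (r:ℝ) ^ (b + (k * n + a)) := by
        calc (2:ℝ) ≤ (r:ℝ) := by exact_mod_cast hr
        _ = (r:ℝ) ^ 1 := (pow_one _).symm
        _ ≤ _ := pow_le_pow_right₀ (le_of_lt hR1) (by omega)
      linarith
    have hkn : (r:ℝ)^(k*n) = ((r:ℝ)^n)^k := by rw [mul_comm, pow_mul]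
    have hbna : (r:ℝ)^(b + (k*n + a)) = (r:ℝ)^a * (r:ℝ)^b * ((r:ℝ)^n)^k := by
      rw [pow_add, pow_add, hkn]; ring
    have hab' : (r:ℝ)^(a+b) = (r:ℝ)^a * (r:ℝ)^b := pow_add _ _ _
    rw [hbna] at hd1
    rw [hab'] at hd2
    rw [xi, hlen, rho_append', rho_append', rho_repK', geom_sum_eq hTne1]
    simp only [hF, List.length_append, length_repK', ← hn, ← ha, ← hb, inv_pow,
      pow_add, hkn, hbna, hab']
    have haz : ((r:ℝ)^a) ≠ 0 := pow_ne_zero _ hRne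
    have hbz : ((r:ℝ)^b) ≠ 0 := pow_ne_zero _ hRne
    generalize hgen : ((r:ℝ)^n)^k = t at ht0 hd1 hd2 ⊢
    have hinv : (t⁻¹ - (r:ℝ)^a*(r:ℝ)^b)⁻¹ = t * (1 - (r:ℝ)^a*(r:ℝ)^b*t)⁻¹ := by
      have h : (t⁻¹ - (r:ℝ)^a*(r:ℝ)^b) * (t * (1 - (r:ℝ)^a*(r:ℝ)^b*t)⁻¹) = 1 := by
        rw [show (t⁻¹ - (r:ℝ)^a*(r:ℝ)^b) * (t * (1 - (r:ℝ)^a*(r:ℝ)^b*t)⁻¹) = (t⁻¹ * t - (r:ℝ)^a*(r:ℝ)^b*t) * (1 - (r:ℝ)^a*(r:ℝ)^b*t)⁻¹ by ring, inv_mul_cancel₀ ht0, mul_inv_cancel₀ hd1]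
      exact inv_eq_of_mul_eq_one_right h
    rw [hinv]
    match_scalars <;> (field_simp [ht0, hTsub, hd1, haz, hbz]; try ring)
  have hcont : ContinuousAt F 0 := by
    have h0 : ((0:ℝ) - (r:ℝ)^(a+b)) ≠ 0 := by nlinarith
    rw [hF]
    apply ContinuousAt.fun_smul
    · exact (continuousAt_id.sub continuousAt_const).inv₀ h0
    · exact ((continuousAt_id.smul continuousAt_const).add
        (((continuousAt_const.mul (continuousAt_const.sub continuousAt_id)).div_const _).smul
          continuousAt_const)).add continuousAt_const
  have hu : Filter.Tendsto (fun k : ℕ => (((r:ℝ)^n)⁻¹) ^ k) Filter.atTop (nhds 0) := by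
    apply tendsto_pow_atTop_nhds_zero_of_lt_one
    · positivity
    · rw [inv_lt_one_iff₀]
      right
      exact hT1
  have htend : Filter.Tendsto (fun k : ℕ => xi r m (σ₂ ++ repK σ k ++ σ₁))
      Filter.atTop (nhds (GamInv r m σ₁ (xi r m σ))) := by
    rw [← hF0]
    exact (hcont.tendsto.comp hu).congr fun k => (hkey k).symm
  exact mem_closure_of_tendsto htend (Filter.Eventually.of_forall fun k => ⟨k, rfl⟩)
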